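/- Let Q* be the extended quiver of a quiver Q (extra vertex 0, dimension 1 at vertex 0) with dimension vector m* = (1, m), m ≠ 0. Take the stability parameter ξ⁺ with ξ⁺_i = √−1 for all i ∈ V(Q) and Re(ξ⁺₀) < 0. Then a Q*-representation 𝕍* with dimension vector m* is ξ⁺-semistable if and only if it is ξ⁺-stable, if and only if the images of the linear maps 𝔼_{0,i} → V_i (for all i ∈ V(Q)) generate ⊕_i V_i as a module over the path algebra ℂ[Q]. -/

import Mathlib

/-!
STATEMENT 11: Let `Q*` be the extended quiver of a quiver `Q` (extra vertex `0`,
`a i` edges `0 → i`, `b i` edges `i → 0`, `c` loops at `0`) and `𝕍*` a representation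
of `Q*` with dimension vector `m* = (1, m)`, `m ≠ 0`, given by a `Q`-representation
`(W, u)` together with the vectors `α i e ∈ W i` (images of `1 ∈ ℂ` along the edges
`0 → i`), the functionals `β i e : W i → ℂ` (edges `i → 0`) and scalars `γ` (loops).
Take the stability parameter `ξ⁺` with `ξ⁺_i = √−1` for `i ∈ V(Q)` and
`ξ⁺₀ ∈ ℍ` with `Re ξ⁺₀ < 0`.  Then `𝕍*` is `ξ⁺`-semistable iff it is `ξ⁺`-stable
iff the images of the linear maps `𝔼_{0,i} → W i` generate `⊕_i W i` as a
`ℂ[Q]`-module (i.e. the only family of subspaces closed under the structure maps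
and containing all vectors `α i e` is the full family).
-/
open Complex Real

lemma ratio_mem {z : ℂ} (hz : z ≠ 0) : z.re / ‖z‖ ∈ Set.Icc (-1 : ℝ) 1 := by
  have h1 : |z.re / ‖z‖| ≤ 1 := by
    rw [abs_div, abs_of_pos (norm_pos_iff.mpr hz)]
    exact div_le_one_of_le₀ (Complex.abs_re_le_norm z) (norm_nonneg z)
  exact abs_le.1 h1

lemma arg_aux {z w : ℂ} (hre : z.re = w.re) (hz : z.re < 0) (hzim : 0 ≤ z.im)
    (him : z.im < w.im) : w.arg < z.arg := by
  have hzne : z ≠ 0 := fun h => by simp [h] at hz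
  have hwne : w ≠ 0 := fun h => by rw [h, Complex.zero_re] at hre; exact hz.ne hre
  rw [Complex.arg_of_im_nonneg_of_ne_zero hzim hzne,
    Complex.arg_of_im_nonneg_of_ne_zero (le_trans hzim him.le) hwne]
  have hdiv : z.re / ‖z‖ < w.re / ‖w‖ := by
    have habs : ‖z‖ < ‖w‖ := by
      have h2 : ‖z‖ ^ 2 < ‖w‖ ^ 2 := by
        rw [Complex.sq_norm, Complex.sq_norm, Complex.normSq_apply, Complex.normSq_apply, ← hre]
        nlinarith
      exact lt_of_pow_lt_pow_left₀ 2 (norm_nonneg w) h2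
    rw [div_lt_div_iff₀ (norm_pos_iff.mpr hzne) (norm_pos_iff.mpr hwne), ← hre]
    nlinarith [norm_pos_iff.mpr hzne, norm_pos_iff.mpr hwne]
  exact Real.strictAntiOn_arccos (ratio_mem hzne) (ratio_mem hwne) hdiv

lemma arg_aux2 {z : ℂ} (hz : z.re < 0) (hzim : 0 ≤ z.im) : π / 2 < z.arg := by
  have hzne : z ≠ 0 := fun h => by simp [h] at hz
  rw [Complex.arg_of_im_nonneg_of_ne_zero hzim hzne]
  rw [lt_iff_not_ge]
  intro h
  have h1 := Real.arccos_le_pi_div_two.1 h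
  have h2 : z.re / ‖z‖ < 0 := div_neg_of_neg_of_pos hz (norm_pos_iff.mpr hzne)
  linarith

theorem extended_quiver_xi_plus_stability
    (VQ : Type*) [Fintype VQ]
    (Eij : VQ → VQ → Type*)
    (a b : VQ → ℕ) (c : ℕ)
    (W : VQ → Type*) [∀ i, AddCommGroup (W i)] [∀ i, Module ℂ (W i)]
    [∀ i, FiniteDimensional ℂ (W i)]
    (u : ∀ i j, Eij i j → (W i →ₗ[ℂ] W j))
    (α : ∀ i, Fin (a i) → W i)
    (β : ∀ i, Fin (b i) → (W i →ₗ[ℂ] ℂ))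
    (γ : Fin c → ℂ)
    (ξ₀ : ℂ) (hξ₀im : 0 < ξ₀.im) (hξ₀re : ξ₀.re < 0)
    (hm : ∃ i, Module.finrank ℂ (W i) ≠ 0) :
    -- a subrepresentation of `𝕍*` is a pair `(F₀, F)` of families of subspaces
    -- closed under all the structure maps of `Q*`
    let IsSubrep : Submodule ℂ ℂ → (∀ i, Submodule ℂ (W i)) → Prop := fun F₀ F =>
      (∀ i j (e : Eij i j), (F i).map (u i j e) ≤ F j)
      ∧ (∀ i (e : Fin (a i)), ∀ x ∈ F₀, x • α i e ∈ F i)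
      ∧ (∀ i (e : Fin (b i)), ∀ w ∈ F i, β i e w ∈ F₀)
    let Z : Submodule ℂ ℂ → (∀ i, Submodule ℂ (W i)) → ℂ := fun F₀ F =>
      (Module.finrank ℂ F₀ : ℂ) * ξ₀
        + ∑ i, (Module.finrank ℂ (F i) : ℂ) * Complex.I
    let Semistable : Prop := ∀ F₀ F, IsSubrep F₀ F →
      (F₀ ≠ ⊥ ∨ ∃ i, F i ≠ ⊥) → ¬ (F₀ = ⊤ ∧ ∀ i, F i = ⊤) →
      (Z F₀ F).arg ≤ (Z ⊤ fun _ => ⊤).arg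
    let Stable : Prop := ∀ F₀ F, IsSubrep F₀ F →
      (F₀ ≠ ⊥ ∨ ∃ i, F i ≠ ⊥) → ¬ (F₀ = ⊤ ∧ ∀ i, F i = ⊤) →
      (Z F₀ F).arg < (Z ⊤ fun _ => ⊤).arg
    let Generates : Prop := ∀ F : ∀ i, Submodule ℂ (W i),
      (∀ i j (e : Eij i j), (F i).map (u i j e) ≤ F j) →
      (∀ i (e : Fin (a i)), α i e ∈ F i) → ∀ i, F i = ⊤

    (Semistable ↔ Stable) ∧ (Stable ↔ Generates) := by
  intro IsSubrep Z Semistable Stable Generates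
  classical
  set M : ℕ := ∑ i, Module.finrank ℂ (W i) with hMdef
  have hMpos : 0 < M := by
    obtain ⟨i, hi⟩ := hm
    exact Finset.sum_pos' (fun _ _ => Nat.zero_le _)
      ⟨i, Finset.mem_univ i, Nat.pos_of_ne_zero hi⟩
  -- `f k` is the value of `Z` on a subrep with `F₀ = ⊤` and total `F`-dimension `k`
  set f : ℕ → ℂ := fun k => ξ₀ + (k : ℂ) * Complex.I with hfdef
  have hfre : ∀ k : ℕ, (f k).re = ξ₀.re := by intro k; simp [hfdef]
  have hfim : ∀ k : ℕ, (f k).im = ξ₀.im + k := by intro k; simp [hfdef]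
  have hf : ∀ {k m : ℕ}, k < m → (f m).arg < (f k).arg := by
    intro k m hkm
    refine arg_aux (by rw [hfre, hfre]) (by rw [hfre]; exact hξ₀re) ?_ ?_
    · rw [hfim]; positivity
    · rw [hfim, hfim]
      have : (k : ℝ) < m := by exact_mod_cast hkm
      linarith
  have hf2 : ∀ k : ℕ, π / 2 < (f k).arg := by
    intro k
    refine arg_aux2 (by rw [hfre]; exact hξ₀re) ?_
    rw [hfim]; positivity
  have hZtop : (Z ⊤ fun _ => ⊤) = f M := by
    simp only [Z, hfdef, hMdef]
    rw [finrank_top ℂ ℂ, Module.finrank_self, ← Finset.sum_mul]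
    push_cast
    congr 1
    · ring
    · congr 1
      refine Finset.sum_congr rfl fun i _ => ?_
      rw [finrank_top]
  -- a submodule of ℂ is ⊥ or ⊤
  have hbt : ∀ F₀ : Submodule ℂ ℂ, F₀ = ⊥ ∨ F₀ = ⊤ := by
    intro F₀
    rcases Nat.eq_zero_or_pos (Module.finrank ℂ F₀) with h | h
    · exact Or.inl (Submodule.finrank_eq_zero.1 h)
    · refine Or.inr (Submodule.eq_top_of_finrank_eq ?_)
      have h1 : Module.finrank ℂ F₀ ≤ Module.finrank ℂ ℂ := Submodule.finrank_le F₀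
      rw [Module.finrank_self] at h1 ⊢
      omega
  -- ¬ Generates → ¬ Semistable
  have hSG : Semistable → Generates := by
    intro hS F hclosed hα
    by_contra hng
    push_neg at hng
    obtain ⟨i₀, hi₀⟩ := hng
    have hsub : IsSubrep ⊤ F := by
      refine ⟨hclosed, fun i e x _ => Submodule.smul_mem _ x (hα i e),
        fun i e w _ => Submodule.mem_top⟩
    have hne : (⊤ : Submodule ℂ ℂ) ≠ ⊥ ∨ ∃ i, F i ≠ ⊥ := by
      left
      intro h
      have h1 : (1 : ℂ) ∈ (⊥ : Submodule ℂ ℂ) := h ▸ Submodule.mem_top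
      rw [Submodule.mem_bot] at h1
      exact one_ne_zero h1
    have hnt : ¬ ((⊤ : Submodule ℂ ℂ) = ⊤ ∧ ∀ i, F i = ⊤) := fun ⟨_, hall⟩ => hi₀ (hall i₀)
    have hle := hS ⊤ F hsub hne hnt
    have hZF : Z ⊤ F = f (∑ i, Module.finrank ℂ (F i)) := by
      simp only [Z, hfdef]
      rw [finrank_top ℂ ℂ, Module.finrank_self, ← Finset.sum_mul]
      push_cast
      ring
    have hklt : (∑ i, Module.finrank ℂ (F i)) < M := by
      refine Finset.sum_lt_sum (fun i _ => Submodule.finrank_le (F i))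
        ⟨i₀, Finset.mem_univ i₀, Submodule.finrank_lt hi₀⟩
    rw [hZF, hZtop] at hle
    exact absurd hle (not_le.2 (hf hklt))
  -- Generates → Stable
  have hGS : Generates → Stable := by
    intro hG F₀ F hsub hne hnt
    rcases hbt F₀ with h0 | h0
    · -- F₀ = ⊥ : the value of Z is purely imaginary nonzero, arg = π/2
      have hex : ∃ i, F i ≠ ⊥ := by
        rcases hne with h | h
        · exact absurd h0 h
        · exact h
      obtain ⟨i₀, hi₀⟩ := hex
      have hkpos : 0 < (∑ i, Module.finrank ℂ (F i)) := by
        refine Finset.sum_pos' (fun _ _ => Nat.zero_le _) ⟨i₀, Finset.mem_univ i₀, ?_⟩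
        by_contra h
        push_neg at h
        exact hi₀ (Submodule.finrank_eq_zero.1 (Nat.le_zero.1 h))
      have hZF : Z F₀ F = ((∑ i, Module.finrank ℂ (F i) : ℕ) : ℝ) * Complex.I := by
        simp only [Z, h0]
        rw [finrank_bot, ← Finset.sum_mul]
        push_cast
        ring
      have harg : (Z F₀ F).arg = π / 2 := by
        rw [hZF, Complex.arg_real_mul _ (by exact_mod_cast hkpos), Complex.arg_I]
      rw [harg, hZtop]
      exact hf2 M
    · -- F₀ = ⊤ : then F contains all α's, so F = ⊤ everywhere, contradiction
      exfalso
      apply hnt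
      refine ⟨h0, hG F hsub.1 fun i e => ?_⟩
      have := hsub.2.1 i e 1 (h0 ▸ Submodule.mem_top)
      simpa using this
  exact ⟨⟨fun h => hGS (hSG h), fun h F₀ F h1 h2 h3 => le_of_lt (h F₀ F h1 h2 h3)⟩,
    ⟨fun h => hSG fun F₀ F h1 h2 h3 => le_of_lt (h F₀ F h1 h2 h3), hGS⟩⟩
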